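/- arXiv:2301.10415 — 2 statements merged into one kernel-verified Lean document; each statement's English description precedes it below -/
import Mathlib

section
/- The kernel equation has at most one C² solution: if k₁ and k₂ are both twice continuously differentiable functions on D satisfying the kernel equation (i)–(iv), then k₁(x,y) = k₂(x,y) for every (x,y) ∈ D. -/
open MeasureTheory Set Filter
open scoped ENNReal

noncomputable section

/-- The triangular domain `D = {(x,y) : 0 ≤ y ≤ x ≤ 1}`. -/
def Dset : Set (ℝ × ℝ) := {p : ℝ × ℝ | 0 ≤ p.2 ∧ p.2 ≤ p.1 ∧ p.1 ≤ 1}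

/-- Partial derivative in the first variable (within `D`). -/
def pd1 (K : ℝ × ℝ → ℝ) (p : ℝ × ℝ) : ℝ := fderivWithin ℝ K Dset p (1, 0)

/-- Partial derivative in the second variable (within `D`). -/
def pd2 (K : ℝ × ℝ → ℝ) (p : ℝ × ℝ) : ℝ := fderivWithin ℝ K Dset p (0, 1)

lemma Dset_convex : Convex ℝ Dset := by
  intro p hp q hq a b ha hb hab
  obtain ⟨h1, h2, h3⟩ := hp
  obtain ⟨h4, h5, h6⟩ := hq
  refine ⟨?_, ?_, ?_⟩ <;> simp only [Prod.fst_add, Prod.snd_add, Prod.smul_fst, Prod.smul_snd,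
    smul_eq_mul]
  · nlinarith
  · nlinarith
  · nlinarith

def Uopen : Set (ℝ × ℝ) := {p : ℝ × ℝ | 0 < p.2 ∧ p.2 < p.1 ∧ p.1 < 1}

lemma Uopen_isOpen : IsOpen Uopen :=
  (isOpen_lt continuous_const continuous_snd).inter
    ((isOpen_lt continuous_snd continuous_fst).inter (isOpen_lt continuous_fst continuous_const))

lemma Uopen_subset : Uopen ⊆ Dset := fun _ hp => ⟨hp.1.le, hp.2.1.le, hp.2.2.le⟩

lemma Uopen_subset_interior : Uopen ⊆ interior Dset :=
  interior_maximal Uopen_subset Uopen_isOpen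

lemma Dset_interior_nonempty : (interior Dset).Nonempty :=
  ⟨(1/2, 1/4), Uopen_subset_interior (by constructor <;> norm_num)⟩

lemma Dset_uniqueDiffOn : UniqueDiffOn ℝ Dset :=
  uniqueDiffOn_convex Dset_convex Dset_interior_nonempty

lemma Dset_subset_closure_interior : Dset ⊆ closure (interior Dset) := by
  intro p hp
  have key : Tendsto (fun t : ℝ => ((1-t) * p.1 + t * (3/4), (1-t) * p.2 + t * (1/4)))
      (nhdsWithin 0 (Ioi (0:ℝ))) (nhds p) := by
    have hc : Continuous (fun t : ℝ => ((1-t) * p.1 + t * (3/4), (1-t) * p.2 + t * (1/4))) := by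
      fun_prop
    have := hc.tendsto 0
    simp only [sub_zero, one_mul, zero_mul, add_zero] at this
    exact this.mono_left nhdsWithin_le_nhds
  refine mem_closure_of_tendsto key ?_
  filter_upwards [self_mem_nhdsWithin,
    mem_nhdsWithin_of_mem_nhds (Iio_mem_nhds one_pos)] with t ht ht'
  obtain ⟨h1, h2, h3⟩ := hp
  refine Uopen_subset_interior ⟨?_, ?_, ?_⟩ <;> simp only []
  · nlinarith [mem_Ioi.mp ht, mem_Iio.mp ht']
  · nlinarith [mem_Ioi.mp ht, mem_Iio.mp ht']
  · nlinarith [mem_Ioi.mp ht, mem_Iio.mp ht']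

lemma Dset_subset_prod : Dset ⊆ (Icc (0:ℝ) 1) ×ˢ (Icc (0:ℝ) 1) := by
  rintro p ⟨h1, h2, h3⟩
  exact ⟨⟨h1.trans h2, h3⟩, ⟨h1, h2.trans h3⟩⟩

lemma Dset_isCompact : IsCompact Dset := by
  refine (isCompact_Icc.prod isCompact_Icc).of_isClosed_subset ?_ Dset_subset_prod
  exact (isClosed_le continuous_const continuous_snd).inter
    ((isClosed_le continuous_snd continuous_fst).inter
      (isClosed_le continuous_fst continuous_const))

/-- first derivative within Dset -/
def Dw (w : ℝ × ℝ → ℝ) : ℝ × ℝ → (ℝ × ℝ) →L[ℝ] ℝ := fderivWithin ℝ w Dset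

/-- second derivative within Dset -/
def D2w (w : ℝ × ℝ → ℝ) : ℝ × ℝ → (ℝ × ℝ) →L[ℝ] (ℝ × ℝ) →L[ℝ] ℝ := fderivWithin ℝ (Dw w) Dset

section
variable {w : ℝ × ℝ → ℝ}

lemma hw_diff (hw : ContDiffOn ℝ 2 w Dset) : DifferentiableOn ℝ w Dset :=
  hw.differentiableOn two_ne_zero

lemma hL_contDiff (hw : ContDiffOn ℝ 2 w Dset) : ContDiffOn ℝ 1 (Dw w) Dset :=
  hw.fderivWithin Dset_uniqueDiffOn (by norm_num)

lemma hL_diff (hw : ContDiffOn ℝ 2 w Dset) : DifferentiableOn ℝ (Dw w) Dset :=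
  (hL_contDiff hw).differentiableOn one_ne_zero

lemma hL_cont (hw : ContDiffOn ℝ 2 w Dset) : ContinuousOn (Dw w) Dset :=
  (hL_contDiff hw).continuousOn

lemma hM_cont (hw : ContDiffOn ℝ 2 w Dset) : ContinuousOn (D2w w) Dset :=
  (hL_contDiff hw).continuousOn_fderivWithin Dset_uniqueDiffOn le_rfl

lemma hM_symm (hw : ContDiffOn ℝ 2 w Dset) {p : ℝ × ℝ} (hp : p ∈ Dset) (v u : ℝ × ℝ) :
    D2w w p v u = D2w w p u v :=
  (hw p hp).isSymmSndFDerivWithinAt (by simp) Dset_uniqueDiffOn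
    (Dset_subset_closure_interior hp) hp v u

lemma hasFDeriv_Lv (hw : ContDiffOn ℝ 2 w Dset) (v : ℝ × ℝ) {p : ℝ × ℝ} (hp : p ∈ Dset) :
    HasFDerivWithinAt (fun q => Dw w q v)
      ((ContinuousLinearMap.apply ℝ ℝ v).comp (D2w w p)) Dset p := by
  have h1 : HasFDerivWithinAt (Dw w) (D2w w p) Dset p :=
    ((hL_diff hw) p hp).hasFDerivWithinAt
  have h2 := (ContinuousLinearMap.apply ℝ ℝ v).hasFDerivAt.comp_hasFDerivWithinAt p h1
  exact h2.congr (fun q _ => rfl) rfl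

lemma fderivWithin_Lv (hw : ContDiffOn ℝ 2 w Dset) (v : ℝ × ℝ) {p : ℝ × ℝ} (hp : p ∈ Dset)
    (u : ℝ × ℝ) : fderivWithin ℝ (fun q => Dw w q v) Dset p u = D2w w p u v := by
  rw [(hasFDeriv_Lv hw v hp).fderivWithin (Dset_uniqueDiffOn p hp)]
  rfl

lemma pd1_pd1 (hw : ContDiffOn ℝ 2 w Dset) {p : ℝ × ℝ} (hp : p ∈ Dset) :
    pd1 (pd1 w) p = D2w w p (1, 0) (1, 0) :=
  fderivWithin_Lv hw (1, 0) hp (1, 0)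

lemma pd2_pd2 (hw : ContDiffOn ℝ 2 w Dset) {p : ℝ × ℝ} (hp : p ∈ Dset) :
    pd2 (pd2 w) p = D2w w p (0, 1) (0, 1) :=
  fderivWithin_Lv hw (0, 1) hp (0, 1)

lemma line_hasDerivWithinAt {g : ℝ × ℝ → ℝ} {G : (ℝ × ℝ) →L[ℝ] ℝ} {x0 y0 v1 v2 : ℝ}
    {I : Set ℝ} {t : ℝ}
    (hg : HasFDerivWithinAt g G Dset (x0 + t * v1, y0 + t * v2))
    (hmap : MapsTo (fun s : ℝ => ((x0 + s * v1, y0 + s * v2) : ℝ × ℝ)) I Dset) :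
    HasDerivWithinAt (fun s : ℝ => g (x0 + s * v1, y0 + s * v2)) (G (v1, v2)) I t := by
  have h1 : HasDerivAt (fun s : ℝ => x0 + s * v1) v1 t := by
    simpa using ((hasDerivAt_id t).mul_const v1).const_add x0
  have h2 : HasDerivAt (fun s : ℝ => y0 + s * v2) v2 t := by
    simpa using ((hasDerivAt_id t).mul_const v2).const_add y0
  have hγ : HasDerivWithinAt (fun s : ℝ => ((x0 + s * v1, y0 + s * v2) : ℝ × ℝ)) (v1, v2) I t :=
    (h1.prodMk h2).hasDerivWithinAt
  have := hg.comp_hasDerivWithinAt t hγ hmap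
  exact this

end

/-- FTC along a line segment, everything within an interval. -/
lemma ftc_line {g Fv : ℝ × ℝ → ℝ} {x0 y0 v1 v2 t1 t2 : ℝ} (ht : t1 ≤ t2)
    (hgc : ContinuousOn (fun s : ℝ => g (x0 + s * v1, y0 + s * v2)) (Icc t1 t2))
    (hFc : ContinuousOn (fun s : ℝ => Fv (x0 + s * v1, y0 + s * v2)) (Icc t1 t2))
    (hderiv : ∀ t ∈ Ioo t1 t2, HasDerivWithinAt (fun s : ℝ => g (x0 + s * v1, y0 + s * v2))
      (Fv (x0 + t * v1, y0 + t * v2)) (Icc t1 t2) t) :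
    ∫ t in t1..t2, Fv (x0 + t * v1, y0 + t * v2)
      = g (x0 + t2 * v1, y0 + t2 * v2) - g (x0 + t1 * v1, y0 + t1 * v2) := by
  refine intervalIntegral.integral_eq_sub_of_hasDeriv_right_of_le ht hgc
    (fun t ht' => (hderiv t ht').mono_of_mem_nhdsWithin
      (Icc_mem_nhdsGT_of_mem ⟨ht'.1.le, ht'.2⟩)) ?_
  exact (hFc.mono (by rw [uIcc_of_le ht])).intervalIntegrable

theorem main_vanish {w : ℝ × ℝ → ℝ} (hw : ContDiffOn ℝ 2 w Dset)
    {g : ℝ × ℝ → ℝ} (hg : ContinuousOn g Dset)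
    {f : ℝ → ℝ → ℝ} (hf : ContinuousOn (fun p : ℝ × ℝ => f p.1 p.2) (Icc 0 1 ×ˢ Icc 0 1))
    (hPDE : ∀ p ∈ Dset, pd1 (pd1 w) p - pd2 (pd2 w) p
        = g p * w p + ∫ z in p.2..p.1, w (p.1, z) * f z p.2)
    (hdiag : ∀ x ∈ Icc (0:ℝ) 1, pd1 w (x, x) + pd2 w (x, x) = 0)
    (hbot : ∀ x ∈ Icc (0:ℝ) 1, pd2 w (x, 0) = 0)
    (h00 : w (0, 0) = 0) :
    ∀ p ∈ Dset, w p = 0 := by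
  -- abbreviations
  have hwc : ContinuousOn w Dset := hw.continuousOn
  have hwd := hw_diff hw
  have hLc := hL_cont hw
  have hMc := hM_cont hw
  have hsym := fun {p} hp => hM_symm hw (p := p) hp
  set a : ℝ × ℝ → ℝ := fun p => Dw w p (1, 1) with ha_def
  set b : ℝ × ℝ → ℝ := fun p => Dw w p (1, -1) with hb_def
  set F : ℝ × ℝ → ℝ := fun p => D2w w p (1, 0) (1, 0) - D2w w p (0, 1) (0, 1) with hF_def
  have e11 : ((1:ℝ), (1:ℝ)) = ((1, 0) + (0, 1) : ℝ × ℝ) := by norm_num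
  have e1m1 : ((1:ℝ), (-1:ℝ)) = ((1, 0) - (0, 1) : ℝ × ℝ) := by norm_num
  have ha_pd : ∀ p, a p = pd1 w p + pd2 w p := by
    intro p
    simp only [ha_def, e11, map_add]
    rfl
  have hb_pd : ∀ p, b p = pd1 w p - pd2 w p := by
    intro p
    simp only [hb_def, e1m1, map_sub]
    rfl
  have ha_cont : ContinuousOn a Dset :=
    (ContinuousLinearMap.apply ℝ ℝ ((1:ℝ), (1:ℝ))).continuous.comp_continuousOn hLc
  have hb_cont : ContinuousOn b Dset :=
    (ContinuousLinearMap.apply ℝ ℝ ((1:ℝ), (-1:ℝ))).continuous.comp_continuousOn hLc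
  have hF_cont : ContinuousOn F Dset := by
    apply ContinuousOn.sub
    · exact ((ContinuousLinearMap.apply ℝ ℝ ((1:ℝ), (0:ℝ))).continuous.comp
        (ContinuousLinearMap.apply ℝ ((ℝ × ℝ) →L[ℝ] ℝ) ((1:ℝ), (0:ℝ))).continuous).comp_continuousOn hMc
    · exact ((ContinuousLinearMap.apply ℝ ℝ ((0:ℝ), (1:ℝ))).continuous.comp
        (ContinuousLinearMap.apply ℝ ((ℝ × ℝ) →L[ℝ] ℝ) ((0:ℝ), (1:ℝ))).continuous).comp_continuousOn hMc
  have ha_dir : ∀ p ∈ Dset, D2w w p (1, -1) (1, 1) = F p := by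
    intro p hp
    rw [hF_def]
    simp only [e11, e1m1, map_sub, map_add, ContinuousLinearMap.sub_apply,
      ContinuousLinearMap.add_apply]
    have := hsym hp ((1:ℝ), (0:ℝ)) ((0:ℝ), (1:ℝ))
    linarith
  have hb_dir : ∀ p ∈ Dset, D2w w p (1, 1) (1, -1) = F p := by
    intro p hp
    rw [hF_def]
    simp only [e11, e1m1, map_sub, map_add, ContinuousLinearMap.sub_apply,
      ContinuousLinearMap.add_apply]
    have := hsym hp ((1:ℝ), (0:ℝ)) ((0:ℝ), (1:ℝ))
    linarith
  -- diagonal vanishing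
  have hdiag0 : ∀ x ∈ Icc (0:ℝ) 1, a (x, x) = 0 := fun x hx => by
    rw [ha_pd]; exact hdiag x hx
  have hmap_diag : MapsTo (fun s : ℝ => ((0 + s * 1, 0 + s * 1) : ℝ × ℝ)) (Icc (0:ℝ) 1) Dset := by
    intro s hs; simp only [zero_add, mul_one]; exact ⟨hs.1, le_rfl, hs.2⟩
  have hwdiag : ∀ x ∈ Icc (0:ℝ) 1, w (x, x) = 0 := by
    intro x hx
    have hmvt := Convex.norm_image_sub_le_of_norm_hasDerivWithin_le
      (f := fun s : ℝ => w (0 + s * 1, 0 + s * 1)) (f' := fun t => a (0 + t * 1, 0 + t * 1))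
      (C := 0)
      (fun t htm => line_hasDerivWithinAt ((hwd _ (hmap_diag htm)).hasFDerivWithinAt) hmap_diag)
      (fun t htm => by
        simp only [zero_add, mul_one]
        rw [hdiag0 t htm]
        simp)
      (convex_Icc 0 1) (left_mem_Icc.mpr zero_le_one) hx
    norm_num [h00] at hmvt
    have h0 : w ((0:ℝ), (0:ℝ)) = w (0 : ℝ × ℝ) := rfl
    linarith [hmvt, h00, h0]
  -- constants
  obtain ⟨Cg, hCg⟩ := Dset_isCompact.exists_bound_of_continuousOn hg
  obtain ⟨Cf, hCf⟩ := (isCompact_Icc.prod isCompact_Icc).exists_bound_of_continuousOn hf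
  set C : ℝ := max Cg 0 + max Cf 0 with hC_def
  have hC0 : 0 ≤ C := add_nonneg (le_max_right _ _) (le_max_right _ _)
  -- the sup function
  set φ : ℝ → ℝ := fun x => sSup ((fun q => |w q|) '' {q | q ∈ Dset ∧ q.1 ≤ x}) with hφ_def
  have hφ0 : ∀ x, 0 ≤ φ x := fun x =>
    Real.sSup_nonneg (by rintro y ⟨q, _, rfl⟩; exact abs_nonneg _)
  have hbdd : ∀ x : ℝ, BddAbove ((fun q => |w q|) '' {q | q ∈ Dset ∧ q.1 ≤ x}) := by
    intro x
    refine BddAbove.mono (image_mono (fun q hq => hq.1)) ?_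
    exact Dset_isCompact.bddAbove_image hwc.abs
  have hφ_le : ∀ q ∈ Dset, ∀ x : ℝ, q.1 ≤ x → |w q| ≤ φ x := fun q hq x hx =>
    le_csSup (hbdd x) ⟨q, ⟨hq, hx⟩, rfl⟩
  have hφ_mono : Monotone φ := by
    intro x y hxy
    by_cases hne : ((fun q => |w q|) '' {q | q ∈ Dset ∧ q.1 ≤ x}).Nonempty
    · exact csSup_le_csSup (hbdd y) hne
        (image_mono (fun q hq => ⟨hq.1, hq.2.trans hxy⟩))
    · rw [hφ_def]
      simp only
      rw [not_nonempty_iff_eq_empty.mp hne, Real.sSup_empty]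
      exact hφ0 y
  have hφ_int : ∀ u v : ℝ, IntervalIntegrable φ volume u v := fun u v =>
    (hφ_mono.monotoneOn _).intervalIntegrable
  have hseg_nonneg : ∀ u v : ℝ, u ≤ v → 0 ≤ ∫ t in u..v, φ t := fun u v huv =>
    intervalIntegral.integral_nonneg huv (fun t _ => hφ0 t)
  have hint_mono1 : ∀ u v : ℝ, 0 ≤ u → u ≤ v → (∫ t in u..v, φ t) ≤ ∫ t in (0:ℝ)..v, φ t := by
    intro u v h0u huv
    have h1 := intervalIntegral.integral_add_adjacent_intervals (hφ_int 0 u) (hφ_int u v)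
    have h2 := hseg_nonneg 0 u h0u
    linarith
  have hint_mono2 : ∀ u v : ℝ, u ≤ v → (∫ t in (0:ℝ)..u, φ t) ≤ ∫ t in (0:ℝ)..v, φ t := by
    intro u v huv
    have h1 := intervalIntegral.integral_add_adjacent_intervals (hφ_int 0 u) (hφ_int u v)
    have h2 := hseg_nonneg u v huv
    linarith
  -- PDE for F and pointwise bound
  have hF_pde : ∀ p ∈ Dset, F p = g p * w p + ∫ z in p.2..p.1, w (p.1, z) * f z p.2 := by
    intro p hp
    rw [hF_def]
    simp only
    rw [← pd1_pd1 hw hp, ← pd2_pd2 hw hp]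
    exact hPDE p hp
  have hF_bound : ∀ p ∈ Dset, |F p| ≤ C * φ p.1 := by
    intro p hp
    obtain ⟨hp1, hp2, hp3⟩ := hp
    have hpd : p ∈ Dset := ⟨hp1, hp2, hp3⟩
    have hint : ‖∫ z in p.2..p.1, w (p.1, z) * f z p.2‖ ≤ (max Cf 0 * φ p.1) * |p.1 - p.2| := by
      apply intervalIntegral.norm_integral_le_of_norm_le_const
      intro z hz
      rw [uIoc_of_le hp2] at hz
      have hzD : ((p.1, z) : ℝ × ℝ) ∈ Dset := ⟨hp1.trans hz.1.le, hz.2, hp3⟩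
      have hz1 : |w (p.1, z)| ≤ φ p.1 := hφ_le _ hzD p.1 le_rfl
      have hz2 : ‖f z p.2‖ ≤ Cf := hCf (z, p.2)
        ⟨⟨hp1.trans hz.1.le, hz.2.trans hp3⟩, ⟨hp1, hp2.trans hp3⟩⟩
      rw [Real.norm_eq_abs, abs_mul]
      rw [Real.norm_eq_abs] at hz2
      refine le_trans (mul_le_mul hz1 (hz2.trans (le_max_left _ _)) (abs_nonneg _) (hφ0 p.1))
        (le_of_eq (mul_comm _ _))
    have habs : |p.1 - p.2| ≤ 1 := by
      rw [abs_of_nonneg (by linarith)]; linarith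
    have hgw : |g p * w p| ≤ max Cg 0 * φ p.1 := by
      rw [abs_mul]
      have hg1 : |g p| ≤ max Cg 0 := by
        have := hCg p hpd; rw [Real.norm_eq_abs] at this; exact this.trans (le_max_left _ _)
      exact mul_le_mul hg1 (hφ_le p hpd p.1 le_rfl) (abs_nonneg _) (le_max_right _ _)
    rw [hF_pde p hpd]
    have h4 : (max Cf 0 * φ p.1) * |p.1 - p.2| ≤ max Cf 0 * φ p.1 :=
      le_trans (mul_le_mul_of_nonneg_left habs (mul_nonneg (le_max_right _ _) (hφ0 p.1)))
        (le_of_eq (mul_one _))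
    rw [Real.norm_eq_abs] at hint
    calc |g p * w p + ∫ z in p.2..p.1, w (p.1, z) * f z p.2|
        ≤ |g p * w p| + |∫ z in p.2..p.1, w (p.1, z) * f z p.2| := abs_add_le _ _
      _ ≤ max Cg 0 * φ p.1 + max Cf 0 * φ p.1 := add_le_add hgw (hint.trans h4)
      _ = C * φ p.1 := by rw [hC_def]; ring
  -- the function a on the bottom edge, via FTC along antidiagonal from the diagonal
  have hmapA : ∀ x ∈ Icc (0:ℝ) 1,
      MapsTo (fun s : ℝ => ((0 + s * 1, x + s * (-1)) : ℝ × ℝ)) (Icc (x/2) x) Dset := by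
    intro x hx s hs
    exact ⟨show (0:ℝ) ≤ x + s * (-1) by nlinarith [hs.1, hs.2, hx.1, hx.2],
      show x + s * (-1) ≤ 0 + s * 1 by nlinarith [hs.1, hs.2, hx.1, hx.2],
      show (0:ℝ) + s * 1 ≤ 1 by nlinarith [hs.1, hs.2, hx.1, hx.2]⟩
  have hA : ∀ x ∈ Icc (0:ℝ) 1,
      a (x, 0) = ∫ t in (x/2)..x, F (0 + t * 1, x + t * (-1)) := by
    intro x hx
    have hhalf : x/2 ≤ x := by linarith [hx.1]
    have hmap := hmapA x hx
    have hgc : ContinuousOn (fun s : ℝ => a (0 + s * 1, x + s * (-1))) (Icc (x/2) x) :=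
      ha_cont.comp (by fun_prop) hmap
    have hFc' : ContinuousOn (fun s : ℝ => F (0 + s * 1, x + s * (-1))) (Icc (x/2) x) :=
      hF_cont.comp (by fun_prop) hmap
    have hderiv : ∀ t ∈ Ioo (x/2) x, HasDerivWithinAt (fun s : ℝ => a (0 + s * 1, x + s * (-1)))
        (F (0 + t * 1, x + t * (-1))) (Icc (x/2) x) t := by
      intro t htm
      have hmem := hmap (Ioo_subset_Icc_self htm)
      have h := line_hasDerivWithinAt (hasFDeriv_Lv hw ((1:ℝ), (1:ℝ)) hmem) hmap
      have hval : ((ContinuousLinearMap.apply ℝ ℝ ((1:ℝ), (1:ℝ))).comp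
          (D2w w (0 + t * 1, x + t * (-1)))) ((1:ℝ), (-1:ℝ)) = F (0 + t * 1, x + t * (-1)) := by
        rw [ContinuousLinearMap.comp_apply, ContinuousLinearMap.apply_apply]
        exact ha_dir _ hmem
      rw [hval] at h
      exact h
    have hftc := ftc_line hhalf hgc hFc' hderiv
    have hend1 : (((0:ℝ) + x * 1, x + x * (-1)) : ℝ × ℝ) = ((x, 0) : ℝ × ℝ) := by norm_num
    have hend2 : (((0:ℝ) + (x/2) * 1, x + (x/2) * (-1)) : ℝ × ℝ) = ((x/2, x/2) : ℝ × ℝ) := by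
      norm_num; ring
    rw [hend1, hend2, hdiag0 (x/2) ⟨by linarith [hx.1], by linarith [hx.2]⟩, sub_zero] at hftc
    exact hftc.symm
  have habound : ∀ x ∈ Icc (0:ℝ) 1, |a (x, 0)| ≤ C * ∫ t in (0:ℝ)..x, φ t := by
    intro x hx
    rw [hA x hx]
    have hhalf : x/2 ≤ x := by linarith [hx.1]
    have h1 : ‖∫ t in (x/2)..x, F (0 + t * 1, x + t * (-1))‖
        ≤ |∫ t in (x/2)..x, C * φ t| := by
      apply intervalIntegral.norm_integral_le_abs_of_norm_le ?_ ((hφ_int _ _).const_mul C)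
      refine (ae_restrict_iff' measurableSet_uIoc).mpr (ae_of_all _ ?_)
      intro t ht
      rw [uIoc_of_le hhalf] at ht
      have hmem : ((0 + t * 1, x + t * (-1)) : ℝ × ℝ) ∈ Dset := hmapA x hx ⟨ht.1.le, ht.2⟩
      have hFb := hF_bound _ hmem
      rw [Real.norm_eq_abs]
      simpa using hFb
    have h2 : |∫ t in (x/2)..x, C * φ t| = C * ∫ t in (x/2)..x, φ t := by
      rw [abs_of_nonneg (intervalIntegral.integral_nonneg hhalf
        (fun t _ => mul_nonneg hC0 (hφ0 t))), intervalIntegral.integral_const_mul]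
    rw [Real.norm_eq_abs] at h1
    rw [h2] at h1
    exact h1.trans (mul_le_mul_of_nonneg_left (hint_mono1 (x/2) x (by linarith [hx.1]) hhalf) hC0)
  -- b on the bottom edge
  have hb0 : ∀ x ∈ Icc (0:ℝ) 1, b (x, 0) = a (x, 0) := by
    intro x hx
    rw [hb_pd, ha_pd, hbot x hx]
    ring
  -- b along characteristic of slope one, via FTC
  have hmapB : ∀ p ∈ Dset,
      MapsTo (fun s : ℝ => ((p.1 - p.2 + s * 1, 0 + s * 1) : ℝ × ℝ)) (Icc 0 p.2) Dset := by
    intro p hp s hs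
    obtain ⟨hp1, hp2, hp3⟩ := hp
    exact ⟨show (0:ℝ) ≤ 0 + s * 1 by nlinarith [hs.1, hs.2],
      show 0 + s * 1 ≤ p.1 - p.2 + s * 1 by nlinarith [hs.1, hs.2],
      show p.1 - p.2 + s * 1 ≤ 1 by nlinarith [hs.1, hs.2]⟩
  have hB : ∀ p ∈ Dset,
      b p = a (p.1 - p.2, 0) + ∫ t in (0:ℝ)..p.2, F (p.1 - p.2 + t * 1, 0 + t * 1) := by
    intro p hp
    obtain ⟨hp1, hp2, hp3⟩ := hp
    have hpd : p ∈ Dset := ⟨hp1, hp2, hp3⟩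
    have hmap := hmapB p hpd
    have hgc : ContinuousOn (fun s : ℝ => b (p.1 - p.2 + s * 1, 0 + s * 1)) (Icc 0 p.2) :=
      hb_cont.comp (by fun_prop) hmap
    have hFc' : ContinuousOn (fun s : ℝ => F (p.1 - p.2 + s * 1, 0 + s * 1)) (Icc 0 p.2) :=
      hF_cont.comp (by fun_prop) hmap
    have hderiv : ∀ t ∈ Ioo (0:ℝ) p.2,
        HasDerivWithinAt (fun s : ℝ => b (p.1 - p.2 + s * 1, 0 + s * 1))
        (F (p.1 - p.2 + t * 1, 0 + t * 1)) (Icc 0 p.2) t := by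
      intro t htm
      have hmem := hmap (Ioo_subset_Icc_self htm)
      have h := line_hasDerivWithinAt (hasFDeriv_Lv hw ((1:ℝ), (-1:ℝ)) hmem) hmap
      have hval : ((ContinuousLinearMap.apply ℝ ℝ ((1:ℝ), (-1:ℝ))).comp
          (D2w w (p.1 - p.2 + t * 1, 0 + t * 1))) ((1:ℝ), (1:ℝ))
          = F (p.1 - p.2 + t * 1, 0 + t * 1) := by
        rw [ContinuousLinearMap.comp_apply, ContinuousLinearMap.apply_apply]
        exact hb_dir _ hmem
      rw [hval] at h
      exact h
    have hftc := ftc_line hp1 hgc hFc' hderiv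
    have hend1 : ((p.1 - p.2 + p.2 * 1, 0 + p.2 * 1) : ℝ × ℝ) = p := by
      rw [show p.1 - p.2 + p.2 * 1 = p.1 by ring, show (0:ℝ) + p.2 * 1 = p.2 by ring]
    have hend2 : ((p.1 - p.2 + 0 * 1, 0 + 0 * 1) : ℝ × ℝ) = ((p.1 - p.2, 0) : ℝ × ℝ) := by
      norm_num
    rw [hend1, hend2] at hftc
    have hx' : p.1 - p.2 ∈ Icc (0:ℝ) 1 := ⟨by linarith, by linarith⟩
    rw [← hb0 _ hx']
    linarith [hftc]
  have hbbound : ∀ p ∈ Dset, |b p| ≤ C * ∫ t in (0:ℝ)..p.1, φ t := by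
    intro p hp
    obtain ⟨hp1, hp2, hp3⟩ := hp
    have hpd : p ∈ Dset := ⟨hp1, hp2, hp3⟩
    have hx' : p.1 - p.2 ∈ Icc (0:ℝ) 1 := ⟨by linarith, by linarith⟩
    rw [hB p hpd]
    have hmono2 : Monotone (fun t : ℝ => φ (p.1 - p.2 + t)) :=
      fun u v huv => hφ_mono (by linarith : p.1 - p.2 + u ≤ p.1 - p.2 + v)
    have hint2 : IntervalIntegrable (fun t : ℝ => φ (p.1 - p.2 + t)) volume 0 p.2 :=
      (hmono2.monotoneOn _).intervalIntegrable
    have h1 : ‖∫ t in (0:ℝ)..p.2, F (p.1 - p.2 + t * 1, 0 + t * 1)‖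
        ≤ |∫ t in (0:ℝ)..p.2, C * φ (p.1 - p.2 + t)| := by
      apply intervalIntegral.norm_integral_le_abs_of_norm_le ?_ (hint2.const_mul C)
      refine (ae_restrict_iff' measurableSet_uIoc).mpr (ae_of_all _ ?_)
      intro t ht
      rw [uIoc_of_le hp1] at ht
      have hmem : ((p.1 - p.2 + t * 1, 0 + t * 1) : ℝ × ℝ) ∈ Dset :=
        hmapB p hpd ⟨ht.1.le, ht.2⟩
      have hFb := hF_bound _ hmem
      rw [Real.norm_eq_abs]
      simpa using hFb
    have h2 : |∫ t in (0:ℝ)..p.2, C * φ (p.1 - p.2 + t)|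
        = C * ∫ t in (0:ℝ)..p.2, φ (p.1 - p.2 + t) := by
      rw [abs_of_nonneg (intervalIntegral.integral_nonneg hp1
        (fun t _ => mul_nonneg hC0 (hφ0 _))), intervalIntegral.integral_const_mul]
    have h3 : (∫ t in (0:ℝ)..p.2, φ (p.1 - p.2 + t)) = ∫ t in (p.1 - p.2)..p.1, φ t := by
      rw [intervalIntegral.integral_comp_add_left φ (p.1 - p.2)]
      norm_num
    have h4 : (∫ t in (0:ℝ)..(p.1 - p.2), φ t) + (∫ t in (p.1 - p.2)..p.1, φ t)
        = ∫ t in (0:ℝ)..p.1, φ t :=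
      intervalIntegral.integral_add_adjacent_intervals (hφ_int _ _) (hφ_int _ _)
    have h5 := habound _ hx'
    rw [Real.norm_eq_abs] at h1
    calc |a (p.1 - p.2, 0) + ∫ t in (0:ℝ)..p.2, F (p.1 - p.2 + t * 1, 0 + t * 1)|
        ≤ |a (p.1 - p.2, 0)| + |∫ t in (0:ℝ)..p.2, F (p.1 - p.2 + t * 1, 0 + t * 1)| :=
          abs_add_le _ _
      _ ≤ C * (∫ t in (0:ℝ)..(p.1 - p.2), φ t) + C * ∫ t in (p.1 - p.2)..p.1, φ t := by
          rw [h2, h3] at h1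
          exact add_le_add h5 h1
      _ = C * ∫ t in (0:ℝ)..p.1, φ t := by rw [← h4]; ring
  -- bound for w itself via MVT along the antidiagonal from the diagonal
  have hwbound : ∀ p ∈ Dset, |w p| ≤ C * ∫ t in (0:ℝ)..p.1, φ t := by
    intro p hp
    obtain ⟨hp1, hp2, hp3⟩ := hp
    have hpd : p ∈ Dset := ⟨hp1, hp2, hp3⟩
    set m : ℝ := (p.1 + p.2)/2 with hm_def
    have hm1 : 0 ≤ m := by rw [hm_def]; linarith
    have hm2 : m ≤ p.1 := by rw [hm_def]; linarith
    have hm3 : m ≤ 1 := by rw [hm_def]; linarith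
    have hmap : MapsTo (fun s : ℝ => ((0 + s * 1, (p.1 + p.2) + s * (-1)) : ℝ × ℝ))
        (Icc m p.1) Dset := by
      intro s hs
      have hs1 := hs.1; have hs2 := hs.2
      rw [hm_def] at hs1
      exact ⟨show (0:ℝ) ≤ (p.1 + p.2) + s * (-1) by nlinarith,
        show (p.1 + p.2) + s * (-1) ≤ 0 + s * 1 by nlinarith,
        show (0:ℝ) + s * 1 ≤ 1 by nlinarith⟩
    set C' : ℝ := C * ∫ t in (0:ℝ)..p.1, φ t with hC'_def
    have hC'0 : 0 ≤ C' := mul_nonneg hC0 (hseg_nonneg 0 p.1 (by linarith))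
    have hmvt := Convex.norm_image_sub_le_of_norm_hasDerivWithin_le
      (f := fun s : ℝ => w (0 + s * 1, (p.1 + p.2) + s * (-1)))
      (f' := fun t : ℝ => b (0 + t * 1, (p.1 + p.2) + t * (-1)))
      (C := C')
      (fun t htm =>
        line_hasDerivWithinAt ((hwd _ (hmap htm)).hasFDerivWithinAt) hmap)
      (fun t htm => by
        have hmem := hmap htm
        have h1 := hbbound _ hmem
        have h2 : (((0:ℝ) + t * 1, (p.1 + p.2) + t * (-1)) : ℝ × ℝ).1 = t := by norm_num
        rw [h2] at h1
        rw [Real.norm_eq_abs]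
        exact h1.trans (mul_le_mul_of_nonneg_left (hint_mono2 t p.1 htm.2) hC0))
      (convex_Icc m p.1) (left_mem_Icc.mpr hm2) (right_mem_Icc.mpr hm2)
    have hend1 : (((0:ℝ) + p.1 * 1, (p.1 + p.2) + p.1 * (-1)) : ℝ × ℝ) = p := by
      rw [show (0:ℝ) + p.1 * 1 = p.1 by ring, show (p.1 + p.2) + p.1 * (-1) = p.2 by ring]
    have hend2 : (((0:ℝ) + m * 1, (p.1 + p.2) + m * (-1)) : ℝ × ℝ) = ((m, m) : ℝ × ℝ) := by
      rw [show (0:ℝ) + m * 1 = m by ring, show (p.1 + p.2) + m * (-1) = m by rw [hm_def]; ring]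
    rw [hend1, hend2, hwdiag m ⟨hm1, hm3⟩, sub_zero, Real.norm_eq_abs, Real.norm_eq_abs] at hmvt
    have habs : |p.1 - m| ≤ 1 := by
      rw [abs_of_nonneg (by linarith)]; linarith
    calc |w p| ≤ C' * |p.1 - m| := hmvt
      _ ≤ C' * 1 := mul_le_mul_of_nonneg_left habs hC'0
      _ = C' := mul_one _
  -- Gronwall inequality for φ
  have hφ_key : ∀ x ∈ Icc (0:ℝ) 1, φ x ≤ C * ∫ t in (0:ℝ)..x, φ t := by
    intro x hx
    apply Real.sSup_le
    · rintro y ⟨q, ⟨hq, hqx⟩, rfl⟩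
      exact (hwbound q hq).trans (mul_le_mul_of_nonneg_left (hint_mono2 q.1 x hqx) hC0)
    · exact mul_nonneg hC0 (hseg_nonneg 0 x hx.1)
  -- iterate to get factorial decay
  set W : ℝ := φ 1 with hW_def
  have hiter : ∀ n : ℕ, ∀ x ∈ Icc (0:ℝ) 1, φ x ≤ W * C^n * x^n / (n.factorial : ℝ) := by
    intro n
    induction n with
    | zero =>
      intro x hx
      simpa using hφ_mono hx.2
    | succ n ih =>
      intro x hx
      have h1 := hφ_key x hx
      have h2 : (∫ t in (0:ℝ)..x, φ t)
          ≤ ∫ t in (0:ℝ)..x, W * C^n * t^n / (n.factorial : ℝ) := by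
        apply intervalIntegral.integral_mono_on hx.1 (hφ_int 0 x) ?_
          (fun t ht => ih t ⟨ht.1, ht.2.trans hx.2⟩)
        apply Continuous.intervalIntegrable
        fun_prop
      have h3 : (∫ t in (0:ℝ)..x, W * C^n * t^n / (n.factorial : ℝ))
          = W * C^n / (n.factorial : ℝ) * (x^(n+1)/(n+1)) := by
        have hrw : ∀ t : ℝ, W * C^n * t^n / (n.factorial : ℝ)
            = (W * C^n / (n.factorial : ℝ)) * t^n := fun t => by ring
        simp_rw [hrw]
        rw [intervalIntegral.integral_const_mul, integral_pow]
        ring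
      have hfac : (((n+1).factorial : ℝ)) = ((n:ℝ)+1) * (n.factorial : ℝ) := by
        rw [Nat.factorial_succ]; push_cast; ring
      have hne1 : ((n.factorial : ℝ)) ≠ 0 := Nat.cast_ne_zero.mpr n.factorial_ne_zero
      have hne2 : ((n:ℝ)+1) ≠ 0 := by positivity
      have heq : C * (W * C^n / (n.factorial : ℝ) * (x^(n+1)/((n:ℝ)+1)))
          = W * C^(n+1) * x^(n+1) / (((n+1).factorial : ℝ)) := by
        rw [hfac]
        field_simp
        ring
      calc φ x ≤ C * ∫ t in (0:ℝ)..x, φ t := h1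
        _ ≤ C * (W * C^n / (n.factorial : ℝ) * (x^(n+1)/((n:ℝ)+1))) := by
            rw [← h3] at *
            exact mul_le_mul_of_nonneg_left h2 hC0
        _ = W * C^(n+1) * x^(n+1) / (((n+1).factorial : ℝ)) := heq
  -- conclude φ = 0 on [0,1]
  have hφzero : ∀ x ∈ Icc (0:ℝ) 1, φ x = 0 := by
    intro x hx
    refine le_antisymm ?_ (hφ0 x)
    have hlim : Tendsto (fun n : ℕ => W * ((C*x)^n / (n.factorial : ℝ))) atTop (nhds 0) := by
      simpa using (FloorSemiring.tendsto_pow_div_factorial_atTop (C*x)).const_mul W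
    refine ge_of_tendsto' hlim (fun n => ?_)
    have h := hiter n x hx
    calc φ x ≤ W * C^n * x^n / (n.factorial : ℝ) := h
      _ = W * ((C*x)^n / (n.factorial : ℝ)) := by rw [mul_pow]; ring
  -- conclusion
  intro p hp
  have h1 := hφ_le p hp p.1 le_rfl
  have h2 := hφzero p.1 ⟨hp.1.trans hp.2.1, hp.2.2⟩
  rw [h2] at h1
  exact abs_eq_zero.mp (le_antisymm h1 (abs_nonneg _))


/-- `K` is a `C²` solution of the kernel equation on `D`:
(i) `k_xx - k_yy = μ k + f + ∫_y^x k(x,z) f(z,y) dz` on `D`;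
(ii) `k_x(x,x) + k_y(x,x) = λ0/2`; (iii) `k_y(x,0) = 0`; (iv) `k(0,0) = 0`. -/
def IsKernelSol (lam0 : ℝ) (c1 : ℝ → ℝ) (f : ℝ → ℝ → ℝ) (K : ℝ × ℝ → ℝ) : Prop :=
  ContDiffOn ℝ 2 K Dset ∧
  (∀ p ∈ Dset, pd1 (pd1 K) p - pd2 (pd2 K) p =
      (lam0 - c1 p.1 + c1 p.2) * K p + f p.1 p.2 + ∫ z in p.2..p.1, K (p.1, z) * f z p.2) ∧
  (∀ x ∈ Icc (0:ℝ) 1, pd1 K (x, x) + pd2 K (x, x) = lam0 / 2) ∧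
  (∀ x ∈ Icc (0:ℝ) 1, pd2 K (x, 0) = 0) ∧
  K (0, 0) = 0

/-- Uniqueness of the `C²` solution to the kernel equation on `D`. -/
theorem kernel_equation_uniqueness (lam0 : ℝ) (hlam0 : 0 < lam0)
    (c1 : ℝ → ℝ) (hc1 : ContinuousOn c1 (Icc 0 1))
    (f : ℝ → ℝ → ℝ)
    (hf : ContinuousOn (fun p : ℝ × ℝ => f p.1 p.2) (Icc 0 1 ×ˢ Icc 0 1))
    (K1 K2 : ℝ × ℝ → ℝ) (hK1 : IsKernelSol lam0 c1 f K1) (hK2 : IsKernelSol lam0 c1 f K2) :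
    ∀ p ∈ Dset, K1 p = K2 p := by
  obtain ⟨hK1s, hK1pde, hK1diag, hK1bot, hK1zero⟩ := hK1
  obtain ⟨hK2s, hK2pde, hK2diag, hK2bot, hK2zero⟩ := hK2
  set w : ℝ × ℝ → ℝ := fun p => K1 p - K2 p with hw_def
  have hw : ContDiffOn ℝ 2 w Dset := hK1s.sub hK2s
  set g : ℝ × ℝ → ℝ := fun p => lam0 - c1 p.1 + c1 p.2 with hg_def
  have hg : ContinuousOn g Dset := by
    apply ContinuousOn.add
    · apply ContinuousOn.sub continuousOn_const
      exact hc1.comp continuous_fst.continuousOn (fun p hp => (Dset_subset_prod hp).1)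
    · exact hc1.comp continuous_snd.continuousOn (fun p hp => (Dset_subset_prod hp).2)
  -- first-order linearity
  have hd1 : ∀ v : ℝ × ℝ, ∀ p ∈ Dset,
      fderivWithin ℝ w Dset p v = Dw K1 p v - Dw K2 p v := by
    intro v p hp
    have := fderivWithin_fun_sub (Dset_uniqueDiffOn p hp) ((hw_diff hK1s) p hp) ((hw_diff hK2s) p hp)
    rw [hw_def]
    rw [this]
    rfl
  -- second-order linearity
  have hd2 : ∀ v : ℝ × ℝ, ∀ p ∈ Dset,
      fderivWithin ℝ (fun q => fderivWithin ℝ w Dset q v) Dset p v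
        = D2w K1 p v v - D2w K2 p v v := by
    intro v p hp
    have hAB := (hasFDeriv_Lv hK1s v hp).sub (hasFDeriv_Lv hK2s v hp)
    have hcong : fderivWithin ℝ (fun q => fderivWithin ℝ w Dset q v) Dset p
        = fderivWithin ℝ (fun q => Dw K1 q v - Dw K2 q v) Dset p :=
      fderivWithin_congr (fun q hq => hd1 v q hq) (hd1 v p hp)
    have hval : fderivWithin ℝ (fun q => Dw K1 q v - Dw K2 q v) Dset p
        = (ContinuousLinearMap.apply ℝ ℝ v).comp (D2w K1 p)
          - (ContinuousLinearMap.apply ℝ ℝ v).comp (D2w K2 p) := by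
      exact hAB.fderivWithin (Dset_uniqueDiffOn p hp)
    rw [hcong, hval]
    simp [ContinuousLinearMap.sub_apply, ContinuousLinearMap.comp_apply,
      ContinuousLinearMap.apply_apply]
  have hpd1w : ∀ p ∈ Dset, pd1 w p = pd1 K1 p - pd1 K2 p := fun p hp => hd1 (1, 0) p hp
  have hpd2w : ∀ p ∈ Dset, pd2 w p = pd2 K1 p - pd2 K2 p := fun p hp => hd1 (0, 1) p hp
  have hpd11w : ∀ p ∈ Dset, pd1 (pd1 w) p = pd1 (pd1 K1) p - pd1 (pd1 K2) p := by
    intro p hp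
    have := hd2 (1, 0) p hp
    rw [pd1_pd1 hK1s hp, pd1_pd1 hK2s hp]
    exact this
  have hpd22w : ∀ p ∈ Dset, pd2 (pd2 w) p = pd2 (pd2 K1) p - pd2 (pd2 K2) p := by
    intro p hp
    have := hd2 (0, 1) p hp
    rw [pd2_pd2 hK1s hp, pd2_pd2 hK2s hp]
    exact this
  -- subtracted PDE
  have hPDEw : ∀ p ∈ Dset, pd1 (pd1 w) p - pd2 (pd2 w) p
      = g p * w p + ∫ z in p.2..p.1, w (p.1, z) * f z p.2 := by
    intro p hp
    obtain ⟨hp1, hp2, hp3⟩ := hp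
    have hpd : p ∈ Dset := ⟨hp1, hp2, hp3⟩
    have hIcc : uIcc p.2 p.1 = Icc p.2 p.1 := uIcc_of_le hp2
    have hmapz : MapsTo (fun z : ℝ => ((p.1, z) : ℝ × ℝ)) (Icc p.2 p.1) Dset :=
      fun z hz => ⟨hp1.trans hz.1, hz.2, hp3⟩
    have hmapz' : MapsTo (fun z : ℝ => ((z, p.2) : ℝ × ℝ)) (Icc p.2 p.1)
        ((Icc (0:ℝ) 1) ×ˢ (Icc (0:ℝ) 1)) :=
      fun z hz => ⟨⟨hp1.trans hz.1, hz.2.trans hp3⟩, hp1, hp2.trans hp3⟩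
    have hI1 : IntervalIntegrable (fun z => K1 (p.1, z) * f z p.2) volume p.2 p.1 := by
      apply ContinuousOn.intervalIntegrable
      rw [hIcc]
      exact (hK1s.continuousOn.comp (by fun_prop) hmapz).mul (hf.comp (by fun_prop) hmapz')
    have hI2 : IntervalIntegrable (fun z => K2 (p.1, z) * f z p.2) volume p.2 p.1 := by
      apply ContinuousOn.intervalIntegrable
      rw [hIcc]
      exact (hK2s.continuousOn.comp (by fun_prop) hmapz).mul (hf.comp (by fun_prop) hmapz')
    have hInt : (∫ z in p.2..p.1, w (p.1, z) * f z p.2)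
        = (∫ z in p.2..p.1, K1 (p.1, z) * f z p.2) - ∫ z in p.2..p.1, K2 (p.1, z) * f z p.2 := by
      rw [← intervalIntegral.integral_sub hI1 hI2]
      apply intervalIntegral.integral_congr
      intro z _
      rw [hw_def]
      ring
    have h1 := hK1pde p hpd
    have h2 := hK2pde p hpd
    have hgw : g p * w p = g p * K1 p - g p * K2 p := by rw [hw_def]; ring
    have hg' : g p = lam0 - c1 p.1 + c1 p.2 := rfl
    rw [hpd11w p hpd, hpd22w p hpd, hInt, hgw, hg']
    linarith
  -- boundary conditions
  have hdiagw : ∀ x ∈ Icc (0:ℝ) 1, pd1 w (x, x) + pd2 w (x, x) = 0 := by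
    intro x hx
    have hmem : ((x, x) : ℝ × ℝ) ∈ Dset := ⟨hx.1, le_rfl, hx.2⟩
    rw [hpd1w _ hmem, hpd2w _ hmem]
    linarith [hK1diag x hx, hK2diag x hx]
  have hbotw : ∀ x ∈ Icc (0:ℝ) 1, pd2 w (x, 0) = 0 := by
    intro x hx
    have hmem : ((x, 0) : ℝ × ℝ) ∈ Dset := ⟨le_rfl, hx.1, hx.2⟩
    rw [hpd2w _ hmem]
    rw [hK1bot x hx, hK2bot x hx]
    ring
  have h00w : w (0, 0) = 0 := by
    show K1 (0, 0) - K2 (0, 0) = 0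
    rw [hK1zero, hK2zero]
    ring
  have := main_vanish hw hg hf hPDEw hdiagw hbotw h00w
  intro p hp
  have hzero := this p hp
  rw [hw_def] at hzero
  exact sub_eq_zero.mp hzero
end
end

section
/- For all (ξ,η) ∈ E one has |Φ_{G0}(ξ,η)| ≤ M(Λ̄ξη/4 + f̄ξη²/8 − f̄η³/24) ≤ M²(ξ+η), where M := (f̄ + Λ̄)/2. -/
open MeasureTheory Set
open scoped ENNReal

noncomputable section

/-- `f̄ := max_{[0,1]²} |f|`. -/
def fbar (f : ℝ → ℝ → ℝ) : ℝ :=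
  sSup ((fun p : ℝ × ℝ => |f p.1 p.2|) '' (Icc (0:ℝ) 1 ×ˢ Icc (0:ℝ) 1))

/-- `Λ̄ := max {λ0, max_D |λ0 - c1(x) + c1(y)|}`. -/
def Lambdabar (lam0 : ℝ) (c1 : ℝ → ℝ) : ℝ :=
  max lam0 (sSup ((fun p : ℝ × ℝ => |lam0 - c1 p.1 + c1 p.2|) '' Dset))

/-- `M := (f̄ + Λ̄)/2`. -/
def Mconst (lam0 : ℝ) (c1 : ℝ → ℝ) (f : ℝ → ℝ → ℝ) : ℝ :=
  (fbar f + Lambdabar lam0 c1) / 2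

/-- The transformed domain `E = {(ξ,η) : 0 ≤ η ≤ 1, η ≤ ξ ≤ 2 - η}`. -/
def Eset : Set (ℝ × ℝ) := {p : ℝ × ℝ | 0 ≤ p.2 ∧ p.2 ≤ 1 ∧ p.2 ≤ p.1 ∧ p.1 ≤ 2 - p.2}

/-- `μ̃(ξ,η) := λ0 - c1((ξ+η)/2) + c1((ξ-η)/2)`. -/
def mutld (lam0 : ℝ) (c1 : ℝ → ℝ) (xi eta : ℝ) : ℝ :=
  lam0 - c1 ((xi + eta) / 2) + c1 ((xi - eta) / 2)

/-- The inhomogeneous term `G0` of the integral equation. -/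
def Gzero (lam0 : ℝ) (f : ℝ → ℝ → ℝ) (xi eta : ℝ) : ℝ :=
  lam0 / 4 * (xi + eta)
    + (1 / 4) * (∫ tau in eta..xi, ∫ s in (0:ℝ)..eta, f ((tau + s) / 2) ((tau - s) / 2))
    + (1 / 2) * (∫ tau in (0:ℝ)..eta, ∫ s in (0:ℝ)..tau, f ((tau + s) / 2) ((tau - s) / 2))

/-- The integral operator `Φ_H`. -/
def Phi (lam0 : ℝ) (c1 : ℝ → ℝ) (f : ℝ → ℝ → ℝ) (H : ℝ → ℝ → ℝ) (xi eta : ℝ) : ℝ :=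
  (1 / 4) * (∫ tau in eta..xi, ∫ s in (0:ℝ)..eta, mutld lam0 c1 tau s * H tau s)
    + (1 / 2) * (∫ tau in (0:ℝ)..eta, ∫ s in (0:ℝ)..tau, mutld lam0 c1 tau s * H tau s)
    + (1 / 4) * (∫ z in eta..xi, ∫ s in (0:ℝ)..eta, ∫ tau in z..(z + eta - s),
        f ((tau - s) / 2) (z - (tau + s) / 2) * H tau s)
    + (1 / 2) * (∫ z in (0:ℝ)..eta, ∫ s in (0:ℝ)..z, ∫ tau in z..(2 * z - s),
        f ((tau - s) / 2) (z - (tau + s) / 2) * H tau s)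

open scoped Interval

private lemma abs_add4 (a b c d : ℝ) : |a + b + c + d| ≤ |a| + |b| + |c| + |d| := by
  calc |a + b + c + d| ≤ |a + b + c| + |d| := abs_add_le _ _
    _ ≤ (|a + b| + |c|) + |d| := by linarith [abs_add_le (a + b) c]
    _ ≤ |a| + |b| + |c| + |d| := by linarith [abs_add_le a b]

set_option maxHeartbeats 1000000 in
private theorem Phi_Gzero_bound_aux (lam0 : ℝ) (hlam0 : 0 < lam0)
    (c1 : ℝ → ℝ) (hc1 : ContinuousOn c1 (Icc 0 1))
    (f : ℝ → ℝ → ℝ)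
    (hf : ContinuousOn (fun p : ℝ × ℝ => f p.1 p.2) (Icc 0 1 ×ˢ Icc 0 1)) :
    ∀ xi eta : ℝ, (xi, eta) ∈ Eset →
      |Phi lam0 c1 f (Gzero lam0 f) xi eta| ≤
          Mconst lam0 c1 f * (Lambdabar lam0 c1 * xi * eta / 4
            + fbar f * xi * eta ^ 2 / 8 - fbar f * eta ^ 3 / 24) ∧
        Mconst lam0 c1 f * (Lambdabar lam0 c1 * xi * eta / 4
            + fbar f * xi * eta ^ 2 / 8 - fbar f * eta ^ 3 / 24) ≤
          Mconst lam0 c1 f ^ 2 * (xi + eta) := by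
  intro xi eta hE
  obtain ⟨he0, he1, hex, hx2⟩ : 0 ≤ eta ∧ eta ≤ 1 ∧ eta ≤ xi ∧ xi ≤ 2 - eta := hE
  have hx0 : 0 ≤ xi := le_trans he0 hex
  set F := fbar f with hFd
  set L := Lambdabar lam0 c1 with hLd
  set M := Mconst lam0 c1 f with hMd
  have hMeq : M = (F + L) / 2 := rfl
  -- basic bounds on F
  have hcpt2 : IsCompact (Icc (0:ℝ) 1 ×ˢ Icc (0:ℝ) 1) := isCompact_Icc.prod isCompact_Icc
  have hbddf : BddAbove ((fun p : ℝ × ℝ => |f p.1 p.2|) '' (Icc (0:ℝ) 1 ×ˢ Icc (0:ℝ) 1)) :=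
    (hcpt2.image_of_continuousOn hf.abs).bddAbove
  have hfb : ∀ x y : ℝ, 0 ≤ x → x ≤ 1 → 0 ≤ y → y ≤ 1 → |f x y| ≤ F := fun x y hx hx' hy hy' =>
    le_csSup hbddf ⟨(x, y), ⟨⟨hx, hx'⟩, ⟨hy, hy'⟩⟩, rfl⟩
  have hF0 : 0 ≤ F := le_trans (abs_nonneg _) (hfb 0 0 le_rfl zero_le_one le_rfl zero_le_one)
  -- basic bounds on L
  have hDsub : Dset ⊆ Icc (0:ℝ) 1 ×ˢ Icc (0:ℝ) 1 := fun p hp =>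
    ⟨⟨le_trans hp.1 hp.2.1, hp.2.2⟩, ⟨hp.1, le_trans hp.2.1 hp.2.2⟩⟩
  have hDclosed : IsClosed Dset := by
    have : Dset = {p : ℝ × ℝ | 0 ≤ p.2} ∩ ({p : ℝ × ℝ | p.2 ≤ p.1} ∩ {p : ℝ × ℝ | p.1 ≤ 1}) := by
      ext p; simp [Dset, Set.mem_setOf_eq, and_assoc]
    rw [this]
    exact ((isClosed_le continuous_const continuous_snd).inter
      ((isClosed_le continuous_snd continuous_fst).inter
        (isClosed_le continuous_fst continuous_const)))
  have hDcpt : IsCompact Dset := hcpt2.of_isClosed_subset hDclosed hDsub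
  have hmucont : ContinuousOn (fun p : ℝ × ℝ => |lam0 - c1 p.1 + c1 p.2|) Dset := by
    apply ContinuousOn.abs
    exact (continuousOn_const.sub
        (hc1.comp continuous_fst.continuousOn (fun p hp => (hDsub hp).1))).add
      (hc1.comp continuous_snd.continuousOn (fun p hp => (hDsub hp).2))
  have hbddmu := (hDcpt.image_of_continuousOn hmucont).bddAbove
  have hL0 : lam0 ≤ L := le_max_left _ _
  have hLpos : 0 < L := lt_of_lt_of_le hlam0 hL0
  have hM0 : 0 ≤ M := by rw [hMeq]; linarith
  have hmu : ∀ τ s : ℝ, 0 ≤ s → s ≤ τ → τ ≤ 2 - s → |mutld lam0 c1 τ s| ≤ L := by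
    intro τ s h0 h1 h2
    have hmem : ((τ + s) / 2, (τ - s) / 2) ∈ Dset :=
      ⟨by simp only; linarith, by simp only; linarith, by simp only; linarith⟩
    refine le_trans (le_csSup hbddmu ⟨((τ + s) / 2, (τ - s) / 2), hmem, by simp [mutld]⟩)
      (le_max_right _ _)
  -- bound on Gzero
  have hG : ∀ τ s : ℝ, 0 ≤ s → s ≤ τ → τ ≤ 2 - s → |Gzero lam0 f τ s| ≤ M := by
    intro τ s h0 h1 h2
    have hs1 : s ≤ 1 := by linarith
    have hA : |∫ t in s..τ, ∫ u in (0:ℝ)..s, f ((t + u) / 2) ((t - u) / 2)|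
        ≤ F * s * (τ - s) := by
      have hin : ∀ t ∈ Ι s τ,
          ‖∫ u in (0:ℝ)..s, f ((t + u) / 2) ((t - u) / 2)‖ ≤ F * s := by
        intro t ht
        rw [uIoc_of_le h1] at ht
        have hpt : ∀ u ∈ Ι (0:ℝ) s, ‖f ((t + u) / 2) ((t - u) / 2)‖ ≤ F := by
          intro u hu
          rw [uIoc_of_le h0] at hu
          rw [Real.norm_eq_abs]
          exact hfb _ _ (by linarith [ht.1, hu.1.le]) (by linarith [ht.2, hu.2])
            (by linarith [ht.1, hu.2]) (by linarith [ht.2, hu.1.le])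
        have := intervalIntegral.norm_integral_le_of_norm_le_const hpt
        simpa [abs_of_nonneg h0] using this
      have h := intervalIntegral.norm_integral_le_of_norm_le_const hin
      rw [Real.norm_eq_abs, abs_of_nonneg (by linarith : (0:ℝ) ≤ τ - s)] at h
      exact h
    have hB : |∫ t in (0:ℝ)..s, ∫ u in (0:ℝ)..t, f ((t + u) / 2) ((t - u) / 2)|
        ≤ F * s * s := by
      have hin : ∀ t ∈ Ι (0:ℝ) s,
          ‖∫ u in (0:ℝ)..t, f ((t + u) / 2) ((t - u) / 2)‖ ≤ F * s := by
        intro t ht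
        rw [uIoc_of_le h0] at ht
        have hpt : ∀ u ∈ Ι (0:ℝ) t, ‖f ((t + u) / 2) ((t - u) / 2)‖ ≤ F := by
          intro u hu
          rw [uIoc_of_le ht.1.le] at hu
          rw [Real.norm_eq_abs]
          exact hfb _ _ (by linarith [ht.1, hu.1.le]) (by linarith [ht.2, hu.2])
            (by linarith [hu.2]) (by linarith [ht.2, hu.1.le])
        have := intervalIntegral.norm_integral_le_of_norm_le_const hpt
        have h2' : F * |t - 0| ≤ F * s := by
          rw [sub_zero, abs_of_nonneg ht.1.le]
          exact mul_le_mul_of_nonneg_left ht.2 hF0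
        exact le_trans this h2'
      have h := intervalIntegral.norm_integral_le_of_norm_le_const hin
      rw [Real.norm_eq_abs, sub_zero, abs_of_nonneg h0] at h
      exact h
    have e : Gzero lam0 f τ s = lam0 / 4 * (τ + s)
        + 1 / 4 * (∫ t in s..τ, ∫ u in (0:ℝ)..s, f ((t + u) / 2) ((t - u) / 2))
        + 1 / 2 * (∫ t in (0:ℝ)..s, ∫ u in (0:ℝ)..t, f ((t + u) / 2) ((t - u) / 2)) := rfl
    rw [e, hMeq]
    set A := ∫ t in s..τ, ∫ u in (0:ℝ)..s, f ((t + u) / 2) ((t - u) / 2)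
    set B := ∫ t in (0:ℝ)..s, ∫ u in (0:ℝ)..t, f ((t + u) / 2) ((t - u) / 2)
    have t1 : |lam0 / 4 * (τ + s) + 1 / 4 * A + 1 / 2 * B|
        ≤ lam0 / 4 * (τ + s) + 1 / 4 * |A| + 1 / 2 * |B| := by
      have g3 : |lam0 / 4 * (τ + s)| = lam0 / 4 * (τ + s) :=
        abs_of_nonneg (by nlinarith)
      calc |lam0 / 4 * (τ + s) + 1 / 4 * A + 1 / 2 * B|
          ≤ |lam0 / 4 * (τ + s) + 1 / 4 * A| + |1 / 2 * B| := abs_add_le _ _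
        _ ≤ |lam0 / 4 * (τ + s)| + |1 / 4 * A| + |1 / 2 * B| := by
            linarith [abs_add_le (lam0 / 4 * (τ + s)) (1 / 4 * A)]
        _ = lam0 / 4 * (τ + s) + 1 / 4 * |A| + 1 / 2 * |B| := by
            rw [g3, abs_mul, abs_mul, show |(1:ℝ) / 4| = 1 / 4 by norm_num,
              show |(1:ℝ) / 2| = 1 / 2 by norm_num]
    refine le_trans t1 ?_
    nlinarith [hA, hB, mul_nonneg hF0 h0, mul_nonneg hlam0.le (by linarith : (0:ℝ) ≤ 2 - τ - s),
      mul_nonneg hLpos.le (by linarith : (0:ℝ) ≤ 2 - τ - s),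
      mul_le_mul_of_nonneg_right hL0 (by linarith : (0:ℝ) ≤ τ + s),
      mul_nonneg (mul_nonneg hF0 (by linarith : (0:ℝ) ≤ 1 - s)) (by linarith : (0:ℝ) ≤ τ + s),
      mul_nonneg (mul_nonneg hF0 h0) (by linarith : (0:ℝ) ≤ 2 - τ - s)]
  -- the four term bounds
  have hB1 : |∫ tau in eta..xi, ∫ s in (0:ℝ)..eta, mutld lam0 c1 tau s * Gzero lam0 f tau s|
      ≤ L * M * eta * (xi - eta) := by
    have hin : ∀ tau ∈ Ι eta xi,
        ‖∫ s in (0:ℝ)..eta, mutld lam0 c1 tau s * Gzero lam0 f tau s‖ ≤ L * M * eta := by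
      intro tau ht
      rw [uIoc_of_le hex] at ht
      have hpt : ∀ s ∈ Ι (0:ℝ) eta, ‖mutld lam0 c1 tau s * Gzero lam0 f tau s‖ ≤ L * M := by
        intro s hs
        rw [uIoc_of_le he0] at hs
        rw [Real.norm_eq_abs, abs_mul]
        exact mul_le_mul (hmu _ _ hs.1.le (hs.2.trans ht.1.le) (by linarith [ht.2, hs.2]))
          (hG _ _ hs.1.le (hs.2.trans ht.1.le) (by linarith [ht.2, hs.2]))
          (abs_nonneg _) hLpos.le
      have := intervalIntegral.norm_integral_le_of_norm_le_const hpt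
      simpa [abs_of_nonneg he0] using this
    have h := intervalIntegral.norm_integral_le_of_norm_le_const hin
    rw [Real.norm_eq_abs, abs_of_nonneg (by linarith : (0:ℝ) ≤ xi - eta)] at h
    exact h
  have hB2 : |∫ tau in (0:ℝ)..eta, ∫ s in (0:ℝ)..tau, mutld lam0 c1 tau s * Gzero lam0 f tau s|
      ≤ L * M * (eta ^ 2 / 2) := by
    have hbd : IntervalIntegrable (fun tau => L * M * tau) volume 0 eta :=
      (continuous_const.mul continuous_id).intervalIntegrable _ _
    have hae : ∀ᵐ tau ∂(volume.restrict (Ι (0:ℝ) eta)),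
        ‖∫ s in (0:ℝ)..tau, mutld lam0 c1 tau s * Gzero lam0 f tau s‖ ≤ L * M * tau := by
      refine (ae_restrict_mem measurableSet_uIoc).mono ?_
      intro tau ht
      rw [uIoc_of_le he0] at ht
      have hpt : ∀ s ∈ Ι (0:ℝ) tau, ‖mutld lam0 c1 tau s * Gzero lam0 f tau s‖ ≤ L * M := by
        intro s hs
        rw [uIoc_of_le ht.1.le] at hs
        rw [Real.norm_eq_abs, abs_mul]
        exact mul_le_mul (hmu _ _ hs.1.le hs.2 (by linarith [ht.2, hs.2]))
          (hG _ _ hs.1.le hs.2 (by linarith [ht.2, hs.2])) (abs_nonneg _) hLpos.le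
      have := intervalIntegral.norm_integral_le_of_norm_le_const hpt
      simpa [abs_of_nonneg ht.1.le] using this
    have h := intervalIntegral.norm_integral_le_of_norm_le he0
      (by simpa only [uIoc_of_le he0] using (ae_restrict_iff' measurableSet_uIoc).1 hae) hbd
    rw [Real.norm_eq_abs] at h
    refine h.trans ?_
    have hval : (∫ tau in (0:ℝ)..eta, L * M * tau) = L * M * (eta ^ 2 / 2) := by
      rw [intervalIntegral.integral_const_mul, integral_id]
      ring
    rw [hval]
  have hB3 : |∫ z in eta..xi, ∫ s in (0:ℝ)..eta, ∫ tau in z..(z + eta - s),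
        f ((tau - s) / 2) (z - (tau + s) / 2) * Gzero lam0 f tau s|
      ≤ F * M * (eta ^ 2 / 2) * (xi - eta) := by
    have hin : ∀ z ∈ Ι eta xi,
        ‖∫ s in (0:ℝ)..eta, ∫ tau in z..(z + eta - s),
          f ((tau - s) / 2) (z - (tau + s) / 2) * Gzero lam0 f tau s‖
        ≤ F * M * (eta ^ 2 / 2) := by
      intro z hz
      rw [uIoc_of_le hex] at hz
      have hbd : IntervalIntegrable (fun s => F * M * (eta - s)) volume 0 eta :=
        (continuous_const.mul (continuous_const.sub continuous_id)).intervalIntegrable _ _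
      have hae : ∀ᵐ s ∂(volume.restrict (Ι (0:ℝ) eta)),
          ‖∫ tau in z..(z + eta - s),
            f ((tau - s) / 2) (z - (tau + s) / 2) * Gzero lam0 f tau s‖
          ≤ F * M * (eta - s) := by
        refine (ae_restrict_mem measurableSet_uIoc).mono ?_
        intro s hs
        rw [uIoc_of_le he0] at hs
        have hpt : ∀ tau ∈ Ι z (z + eta - s),
            ‖f ((tau - s) / 2) (z - (tau + s) / 2) * Gzero lam0 f tau s‖ ≤ F * M := by
          intro tau ht
          rw [uIoc_of_le (by linarith [hs.2] : z ≤ z + eta - s)] at ht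
          rw [Real.norm_eq_abs, abs_mul]
          refine mul_le_mul (hfb _ _ (by linarith [hz.1, hs.2, ht.1])
              (by linarith [ht.2, hz.2, hs.1]) (by linarith [ht.2, hz.1])
              (by linarith [ht.1, hs.1, hz.2])) (hG _ _ hs.1.le
              (by linarith [hz.1, hs.2, ht.1]) (by linarith [ht.2, hz.2]))
            (abs_nonneg _) hF0
        have := intervalIntegral.norm_integral_le_of_norm_le_const hpt
        rw [Real.norm_eq_abs, show z + eta - s - z = eta - s by ring,
          abs_of_nonneg (by linarith [hs.2] : (0:ℝ) ≤ eta - s)] at this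
        exact this
      have h := intervalIntegral.norm_integral_le_of_norm_le he0
        (by simpa only [uIoc_of_le he0] using (ae_restrict_iff' measurableSet_uIoc).1 hae) hbd
      rw [Real.norm_eq_abs] at h
      refine h.trans ?_
      have hval : (∫ s in (0:ℝ)..eta, F * M * (eta - s)) = F * M * (eta ^ 2 / 2) := by
        rw [intervalIntegral.integral_const_mul,
          intervalIntegral.integral_sub intervalIntegrable_const intervalIntegral.intervalIntegrable_id,
          integral_id, intervalIntegral.integral_const]
        simp only [smul_eq_mul]
        ring
      rw [hval]
    have h := intervalIntegral.norm_integral_le_of_norm_le_const hin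
    rw [Real.norm_eq_abs, abs_of_nonneg (by linarith : (0:ℝ) ≤ xi - eta)] at h
    exact h
  have hB4 : |∫ z in (0:ℝ)..eta, ∫ s in (0:ℝ)..z, ∫ tau in z..(2 * z - s),
        f ((tau - s) / 2) (z - (tau + s) / 2) * Gzero lam0 f tau s|
      ≤ F * M * (eta ^ 3 / 6) := by
    have hbd : IntervalIntegrable (fun z => F * M * (z ^ 2 / 2)) volume 0 eta :=
      (continuous_const.mul ((continuous_pow 2).div_const 2)).intervalIntegrable _ _
    have hae : ∀ᵐ z ∂(volume.restrict (Ι (0:ℝ) eta)),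
        ‖∫ s in (0:ℝ)..z, ∫ tau in z..(2 * z - s),
          f ((tau - s) / 2) (z - (tau + s) / 2) * Gzero lam0 f tau s‖
        ≤ F * M * (z ^ 2 / 2) := by
      refine (ae_restrict_mem measurableSet_uIoc).mono ?_
      intro z hz
      rw [uIoc_of_le he0] at hz
      have hbd2 : IntervalIntegrable (fun s => F * M * (z - s)) volume 0 z :=
        (continuous_const.mul (continuous_const.sub continuous_id)).intervalIntegrable _ _
      have hae2 : ∀ᵐ s ∂(volume.restrict (Ι (0:ℝ) z)),
          ‖∫ tau in z..(2 * z - s),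
            f ((tau - s) / 2) (z - (tau + s) / 2) * Gzero lam0 f tau s‖
          ≤ F * M * (z - s) := by
        refine (ae_restrict_mem measurableSet_uIoc).mono ?_
        intro s hs
        rw [uIoc_of_le hz.1.le] at hs
        have hpt : ∀ tau ∈ Ι z (2 * z - s),
            ‖f ((tau - s) / 2) (z - (tau + s) / 2) * Gzero lam0 f tau s‖ ≤ F * M := by
          intro tau ht
          rw [uIoc_of_le (by linarith [hs.2] : z ≤ 2 * z - s)] at ht
          rw [Real.norm_eq_abs, abs_mul]
          refine mul_le_mul (hfb _ _ (by linarith [hs.2, ht.1])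
              (by linarith [ht.2, hz.2, hs.1]) (by linarith [ht.2])
              (by linarith [ht.1, hs.1, hz.2])) (hG _ _ hs.1.le
              (by linarith [hs.2, ht.1]) (by linarith [ht.2, hz.2]))
            (abs_nonneg _) hF0
        have := intervalIntegral.norm_integral_le_of_norm_le_const hpt
        rw [Real.norm_eq_abs, show 2 * z - s - z = z - s by ring,
          abs_of_nonneg (by linarith [hs.2] : (0:ℝ) ≤ z - s)] at this
        exact this
      have h := intervalIntegral.norm_integral_le_of_norm_le hz.1.le
        (by simpa only [uIoc_of_le hz.1.le] using (ae_restrict_iff' measurableSet_uIoc).1 hae2) hbd2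
      rw [Real.norm_eq_abs] at h
      refine h.trans ?_
      have hval : (∫ s in (0:ℝ)..z, F * M * (z - s)) = F * M * (z ^ 2 / 2) := by
        rw [intervalIntegral.integral_const_mul,
          intervalIntegral.integral_sub intervalIntegrable_const intervalIntegral.intervalIntegrable_id,
          integral_id, intervalIntegral.integral_const]
        simp only [smul_eq_mul]
        ring
      rw [hval]
    have h := intervalIntegral.norm_integral_le_of_norm_le he0
      (by simpa only [uIoc_of_le he0] using (ae_restrict_iff' measurableSet_uIoc).1 hae) hbd
    rw [Real.norm_eq_abs] at h
    refine h.trans ?_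
    have hval : (∫ z in (0:ℝ)..eta, F * M * (z ^ 2 / 2)) = F * M * (eta ^ 3 / 6) := by
      have : (fun z : ℝ => F * M * (z ^ 2 / 2)) = fun z : ℝ => F * M / 2 * z ^ 2 := by
        funext z; ring
      rw [this, intervalIntegral.integral_const_mul, integral_pow]
      norm_num
      ring
    rw [hval]
  constructor
  · have ePhi : Phi lam0 c1 f (Gzero lam0 f) xi eta
        = 1 / 4 * (∫ tau in eta..xi, ∫ s in (0:ℝ)..eta, mutld lam0 c1 tau s * Gzero lam0 f tau s)
          + 1 / 2 * (∫ tau in (0:ℝ)..eta, ∫ s in (0:ℝ)..tau, mutld lam0 c1 tau s * Gzero lam0 f tau s)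
          + 1 / 4 * (∫ z in eta..xi, ∫ s in (0:ℝ)..eta, ∫ tau in z..(z + eta - s),
              f ((tau - s) / 2) (z - (tau + s) / 2) * Gzero lam0 f tau s)
          + 1 / 2 * (∫ z in (0:ℝ)..eta, ∫ s in (0:ℝ)..z, ∫ tau in z..(2 * z - s),
              f ((tau - s) / 2) (z - (tau + s) / 2) * Gzero lam0 f tau s) := rfl
    rw [ePhi]
    refine le_trans (abs_add4 _ _ _ _) ?_
    rw [abs_mul, abs_mul, abs_mul, abs_mul]
    have e14 : |(1:ℝ) / 4| = 1 / 4 := by norm_num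
    have e12 : |(1:ℝ) / 2| = 1 / 2 := by norm_num
    rw [e14, e12]
    have hfin : (1:ℝ) / 4 * (L * M * eta * (xi - eta)) + 1 / 2 * (L * M * (eta ^ 2 / 2))
        + 1 / 4 * (F * M * (eta ^ 2 / 2) * (xi - eta)) + 1 / 2 * (F * M * (eta ^ 3 / 6))
        = M * (L * xi * eta / 4 + F * xi * eta ^ 2 / 8 - F * eta ^ 3 / 24) := by ring
    linarith [hB1, hB2, hB3, hB4, hfin]
  · have hL2 : L ≤ 2 * M := by rw [hMeq]; linarith [hF0]
    have hF2 : F ≤ 2 * M := by rw [hMeq]; linarith [hLpos.le]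
    have q3 : eta ^ 2 ≤ eta := by nlinarith
    have q4 : xi * eta ≤ xi + eta := by nlinarith [mul_nonneg hx0 (by linarith : (0:ℝ) ≤ 1 - eta)]
    have p1 : L * (xi * eta) ≤ 2 * M * (xi * eta) :=
      mul_le_mul_of_nonneg_right hL2 (mul_nonneg hx0 he0)
    have p2 : F * (xi * eta ^ 2) ≤ 2 * M * (xi * eta ^ 2) :=
      mul_le_mul_of_nonneg_right hF2 (mul_nonneg hx0 (sq_nonneg eta))
    have p3 : M * (xi * eta ^ 2) ≤ M * (xi * eta) :=
      mul_le_mul_of_nonneg_left (mul_le_mul_of_nonneg_left q3 hx0) hM0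
    have p4 : M * (xi * eta) ≤ M * (xi + eta) := mul_le_mul_of_nonneg_left q4 hM0
    have p5 : (0:ℝ) ≤ F * eta ^ 3 := mul_nonneg hF0 (by positivity)
    have p6 : (0:ℝ) ≤ M * (xi + eta) := mul_nonneg hM0 (by linarith)
    have key : L * xi * eta / 4 + F * xi * eta ^ 2 / 8 - F * eta ^ 3 / 24 ≤ M * (xi + eta) := by
      linarith [p1, p2, p3, p4, p5, p6]
    calc M * (L * xi * eta / 4 + F * xi * eta ^ 2 / 8 - F * eta ^ 3 / 24)
        ≤ M * (M * (xi + eta)) := mul_le_mul_of_nonneg_left key hM0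
      _ = M ^ 2 * (xi + eta) := by ring

/-- Bound on `Φ_(G0)`:
`|Φ_(G0)(ξ,η)| ≤ M(Λ̄ξη/4 + f̄ξη²/8 - f̄η³/24) ≤ M²(ξ+η)` on `E`. -/
theorem Phi_Gzero_bound (lam0 : ℝ) (hlam0 : 0 < lam0)
    (c1 : ℝ → ℝ) (hc1 : ContinuousOn c1 (Icc 0 1))
    (f : ℝ → ℝ → ℝ)
    (hf : ContinuousOn (fun p : ℝ × ℝ => f p.1 p.2) (Icc 0 1 ×ˢ Icc 0 1)) :
    ∀ xi eta : ℝ, (xi, eta) ∈ Eset →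
      |Phi lam0 c1 f (Gzero lam0 f) xi eta| ≤
          Mconst lam0 c1 f * (Lambdabar lam0 c1 * xi * eta / 4
            + fbar f * xi * eta ^ 2 / 8 - fbar f * eta ^ 3 / 24) ∧
        Mconst lam0 c1 f * (Lambdabar lam0 c1 * xi * eta / 4
            + fbar f * xi * eta ^ 2 / 8 - fbar f * eta ^ 3 / 24) ≤
          Mconst lam0 c1 f ^ 2 * (xi + eta) :=
  Phi_Gzero_bound_aux lam0 hlam0 c1 hc1 f hf
end
end
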